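/- arXiv:2106.00519 — 2 statements merged into one kernel-verified Lean document; each statement's English description precedes it below -/
import Mathlib

section
/- Let U ⊆ ℝ^n be open and let f : U → ℝ^n be Lipschitz continuous on a neighborhood of x ∈ U. Then, identifying f with the set-valued map whose graph is gph f = {(x', f(x')) : x' ∈ U}, one has Sp f(x) = {rge(I, A) : A ∈ ∇̄f(x)} and Sp* f(x) = {rge(I, Aᵀ) : A ∈ ∇̄f(x)}, where rge(I, A) := {(u, Au) : u ∈ ℝ^n}; in particular Sp f(x) ≠ ∅ and f has the SCD property around x. If f is merely continuous, the inclusions Sp f(x) ⊇ {rge(I, A) : A ∈ ∇̄f(x)} and Sp* f(x) ⊇ {rge(I, Aᵀ) : A ∈ ∇̄f(x)} still hold. -/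
open Filter Topology Metric Set
open scoped InnerProductSpace RealInnerProductSpace ENNReal NNReal

noncomputable section

namespace SCD

abbrev E (n : ℕ) := EuclideanSpace ℝ (Fin n)
abbrev E2 (n : ℕ) := WithLp 2 (E n × E n)

variable {n : ℕ}

def lp2 (n : ℕ) : E2 n ≃ₗ[ℝ] E n × E n := WithLp.linearEquiv 2 ℝ (E n × E n)
def mk2 (u v : E n) : E2 n := (lp2 n).symm (u, v)
def fst2 (z : E2 n) : E n := (lp2 n z).1
def snd2 (z : E2 n) : E n := (lp2 n z).2

instance : FiniteDimensional ℝ (E2 n) := Module.Finite.equiv (lp2 n).symm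

def tcone {H : Type*} [NormedAddCommGroup H] [NormedSpace ℝ H] (A : Set H) (z : H) : Set H :=
  {w | ∃ t : ℕ → ℝ, ∃ wk : ℕ → H, (∀ k, 0 < t k) ∧ Tendsto t atTop (𝓝 0) ∧
      Tendsto wk atTop (𝓝 w) ∧ ∀ k, z + t k • wk k ∈ A}

def gph (F : E n → Set (E n)) : Set (E2 n) := {z | snd2 z ∈ F (fst2 z)}
def projC (L : Submodule ℝ (E2 n)) : E2 n →L[ℝ] E2 n := L.subtypeL.comp L.orthogonalProjectionOnto
def dZ (L₁ L₂ : Submodule ℝ (E2 n)) : ℝ := ‖projC L₁ - projC L₂‖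

def Sneg (n : ℕ) : E2 n ≃ₗ[ℝ] E2 n :=
  (lp2 n).trans (((LinearEquiv.prodComm ℝ (E n) (E n)).trans
    ((LinearEquiv.neg ℝ).prodCongr (LinearEquiv.refl ℝ (E n)))).trans (lp2 n).symm)

def adjS (L : Submodule ℝ (E2 n)) : Submodule ℝ (E2 n) := Lᗮ.map (Sneg n).toLinearMap

/-- `O_F`: the set of points of `gph F` where `F` is graphically smooth of dimension `n`,
i.e. the tangent cone to the graph is an `n`-dimensional linear subspace. -/
def OF (F : E n → Set (E n)) : Set (E2 n) :=
  {z | z ∈ gph F ∧ ∃ L : Submodule ℝ (E2 n),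
    Module.finrank ℝ L = n ∧ (L : Set (E2 n)) = tcone (gph F) z}

/-- The primal generalized derivative `Sp F(x,y)`. -/
def Sp (F : E n → Set (E n)) (z : E2 n) : Set (Submodule ℝ (E2 n)) :=
  {L | Module.finrank ℝ L = n ∧ ∃ (zk : ℕ → E2 n) (Lk : ℕ → Submodule ℝ (E2 n)),
      (∀ k, zk k ∈ gph F ∧ Module.finrank ℝ (Lk k) = n ∧
        ((Lk k : Set (E2 n)) = tcone (gph F) (zk k))) ∧
      Tendsto zk atTop (𝓝 z) ∧ Tendsto (fun k => dZ (Lk k) L) atTop (𝓝 0)}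

/-- The dual generalized derivative `Sp* F(x,y)`. -/
def SpStar (F : E n → Set (E n)) (z : E2 n) : Set (Submodule ℝ (E2 n)) :=
  {L' | ∃ L ∈ Sp F z, L' = adjS L}

/-- `F` has the SCD property at `z ∈ gph F`. -/
def SCDAt (F : E n → Set (E n)) (z : E2 n) : Prop := (Sp F z).Nonempty

/-- `F` has the SCD property around `z ∈ gph F`. -/
def SCDAround (F : E n → Set (E n)) (z : E2 n) : Prop :=
  ∃ δ > (0 : ℝ), ∀ z' ∈ gph F, dist z' z < δ → SCDAt F z'

/-- `Z_n^{reg}`: the subspaces `L ∈ Z_n` such that `(y*, 0) ∈ L` implies `y* = 0`. -/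
def Znreg (n : ℕ) : Set (Submodule ℝ (E2 n)) :=
  {L | Module.finrank ℝ L = n ∧ ∀ y : E n, mk2 y 0 ∈ L → y = 0}

/-- `F` is SCD regular around `z ∈ gph F`. -/
def SCDRegularAround (F : E n → Set (E n)) (z : E2 n) : Prop :=
  SCDAround F z ∧ ∀ L ∈ SpStar F z, L ∈ Znreg n

/-- The set of values `‖y*‖` for `(y*, x*)` in some `L ∈ Sp* F(x,y)` with `‖x*‖ ≤ 1`;
its supremum is the modulus of SCD regularity. -/
def scdregSet (F : E n → Set (E n)) (z : E2 n) : Set ℝ :=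
  {r | ∃ L ∈ SpStar F z, ∃ w : E2 n, w ∈ L ∧ ‖snd2 w‖ ≤ 1 ∧ r = ‖fst2 w‖}

/-- The modulus of SCD regularity `scd reg F(x,y)`. -/
def scdreg (F : E n → Set (E n)) (z : E2 n) : ℝ := sSup (scdregSet F z)

/-- The graph of the outer limiting graphical derivative `D^♯F(x̄,ȳ)`. -/
def DsharpG (F : E n → Set (E n)) (z : E2 n) : Set (E2 n) :=
  {w | ∃ (zk : ℕ → E2 n) (wk : ℕ → E2 n),
    (∀ k, zk k ∈ gph F ∧ wk k ∈ tcone (gph F) (zk k)) ∧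
    Tendsto zk atTop (𝓝 z) ∧ Tendsto wk atTop (𝓝 w)}

/-- The regular (Fréchet) normal cone: the polar of the tangent cone. -/
def regN (A : Set (E2 n)) (z : E2 n) : Set (E2 n) := {w | ∀ v ∈ tcone A z, ⟪w, v⟫_ℝ ≤ 0}

/-- The limiting (Mordukhovich) normal cone. -/
def limN (A : Set (E2 n)) (z : E2 n) : Set (E2 n) :=
  {w | ∃ (zk wk : ℕ → E2 n), (∀ k, zk k ∈ A ∧ wk k ∈ regN A (zk k)) ∧
    Tendsto zk atTop (𝓝 z) ∧ Tendsto wk atTop (𝓝 w)}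

/-- The graph of the limiting coderivative: `(y*, x*)` with `(x*, -y*)` in the limiting
normal cone to the graph. -/
def coderivG (F : E n → Set (E n)) (z : E2 n) : Set (E2 n) :=
  {w | mk2 (snd2 w) (-(fst2 w)) ∈ limN (gph F) z}

/-- The graph of the strict (paratingent) derivative `D_*F(x̄,ȳ)`. -/
def paraconeG (F : E n → Set (E n)) (z : E2 n) : Set (E2 n) :=
  {w | ∃ (t : ℕ → ℝ) (z1 z2 : ℕ → E2 n), (∀ k, 0 < t k) ∧ Tendsto t atTop (𝓝 0) ∧
    (∀ k, z1 k ∈ gph F ∧ z2 k ∈ gph F) ∧ Tendsto z1 atTop (𝓝 z) ∧ Tendsto z2 atTop (𝓝 z) ∧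
    Tendsto (fun k => (t k)⁻¹ • (z2 k - z1 k)) atTop (𝓝 w)}

/-- The B-subdifferential of `f : U → ℝ^n` at `x`. -/
def Bsub (f : E n → E n) (U : Set (E n)) (x : E n) : Set (E n →L[ℝ] E n) :=
  {A | ∃ xk : ℕ → E n, (∀ k, xk k ∈ U ∧ DifferentiableAt ℝ f (xk k)) ∧
    Tendsto xk atTop (𝓝 x) ∧ Tendsto (fun k => fderiv ℝ f (xk k)) atTop (𝓝 A)}

/-- A single-valued map `f` on `U` viewed as a set-valued map. -/
def sv (f : E n → E n) (U : Set (E n)) : E n → Set (E n) := fun x => {y | x ∈ U ∧ y = f x}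

/-- The linear map `u ↦ (u, A u)`. -/
def graphMap (A : E n →L[ℝ] E n) : E n →ₗ[ℝ] E2 n :=
  (lp2 n).symm.toLinearMap.comp (LinearMap.prod LinearMap.id A.toLinearMap)

/-- The subspace `rge(I, A) = {(u, Au) : u ∈ ℝ^n}`. -/
def rgeIA (A : E n →L[ℝ] E n) : Submodule ℝ (E2 n) := LinearMap.range (graphMap A)

/-- The linear map `p ↦ (C p, p)`. -/
def graphMapRev (C : E n →L[ℝ] E n) : E n →ₗ[ℝ] E2 n :=
  (lp2 n).symm.toLinearMap.comp (LinearMap.prod C.toLinearMap LinearMap.id)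

/-- The subspace `rge(C, I) = {(C p, p) : p ∈ ℝ^n}`. -/
def rgeCI (C : E n →L[ℝ] E n) : Submodule ℝ (E2 n) := LinearMap.range (graphMapRev C)

/-- The preimage map `F^{-1}(y)`. -/
def Finv (F : E n → Set (E n)) (y : E n) : Set (E n) := {x | y ∈ F x}

/-- Metric subregularity at `z ∈ gph F` with constant `κ`. -/
def SubregWith (F : E n → Set (E n)) (z : E2 n) (κ : ℝ) : Prop :=
  ∃ δ > (0 : ℝ), ∀ x' : E n, dist x' (fst2 z) < δ →
    EMetric.infEdist x' (Finv F (snd2 z)) ≤ ENNReal.ofReal κ * EMetric.infEdist (snd2 z) (F x')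

/-- `F` is metrically subregular at `z ∈ gph F`. -/
def SubregAt (F : E n → Set (E n)) (z : E2 n) : Prop := ∃ κ, 0 ≤ κ ∧ SubregWith F z κ

/-- The modulus of metric subregularity `subreg F(x,y)`. -/
def subregMod (F : E n → Set (E n)) (z : E2 n) : ℝ := sInf {κ | 0 ≤ κ ∧ SubregWith F z κ}

/-- `F` is strongly metrically subregular at `z ∈ gph F`. -/
def StrSubregAt (F : E n → Set (E n)) (z : E2 n) : Prop :=
  SubregAt F z ∧ ∃ δ > (0 : ℝ), ∀ x' ∈ Finv F (snd2 z), dist x' (fst2 z) < δ → x' = fst2 z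

/-- `F` is strongly metrically subregular around `zb ∈ gph F` (with finite `lsubreg`). -/
def StrSubregAround (F : E n → Set (E n)) (zb : E2 n) : Prop :=
  ∃ δ > (0 : ℝ), (∀ z ∈ gph F, dist z zb < δ → StrSubregAt F z) ∧
    ∃ c : ℝ, ∀ z ∈ gph F, dist z zb < δ → subregMod F z ≤ c

/-- `lsubreg F(x̄,ȳ)`: the limsup of `subreg F(x,y)` over graph points `(x,y) → (x̄,ȳ)`. -/
def lsubreg (F : E n → Set (E n)) (zb : E2 n) : ℝ :=
  Filter.limsup (fun z => subregMod F z) (𝓝[gph F] zb)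

/-- Metric regularity around `zb ∈ gph F` with constant `κ`. -/
def RegWith (F : E n → Set (E n)) (zb : E2 n) (κ : ℝ) : Prop :=
  ∃ δ > (0 : ℝ), ∀ x y : E n, dist x (fst2 zb) < δ → dist y (snd2 zb) < δ →
    EMetric.infEdist x (Finv F y) ≤ ENNReal.ofReal κ * EMetric.infEdist y (F x)

/-- `F` is metrically regular around `zb ∈ gph F`. -/
def MetrRegAround (F : E n → Set (E n)) (zb : E2 n) : Prop := ∃ κ, 0 ≤ κ ∧ RegWith F zb κ

/-- The modulus of metric regularity `reg F(x̄,ȳ)`. -/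
def regMod (F : E n → Set (E n)) (zb : E2 n) : ℝ := sInf {κ | 0 ≤ κ ∧ RegWith F zb κ}

/-- `F` is strongly metrically regular around `zb ∈ gph F`: metrically regular and `F⁻¹`
has a single-valued localization around `(ȳ, x̄)`. -/
def StrRegAround (F : E n → Set (E n)) (zb : E2 n) : Prop :=
  MetrRegAround F zb ∧
  ∃ (X' Y' : Set (E n)) (h : E n → E n), IsOpen X' ∧ IsOpen Y' ∧
    fst2 zb ∈ X' ∧ snd2 zb ∈ Y' ∧ h (snd2 zb) = fst2 zb ∧
    gph F ∩ {w | fst2 w ∈ X' ∧ snd2 w ∈ Y'} = {w | snd2 w ∈ Y' ∧ fst2 w = h (snd2 w)}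

/-- `F` is SCD semismooth* at `zb ∈ gph F`. -/
def SCDSemismoothAt (F : E n → Set (E n)) (zb : E2 n) : Prop :=
  SCDAround F zb ∧ ∀ ε > (0 : ℝ), ∃ δ > (0 : ℝ), ∀ z ∈ gph F, dist z zb ≤ δ →
    ∀ L ∈ SpStar F z, ∀ w : E2 n, w ∈ L →
      |⟪snd2 w, fst2 z - fst2 zb⟫_ℝ - ⟪fst2 w, snd2 z - snd2 zb⟫_ℝ| ≤ ε * ‖z - zb‖ * ‖w‖

/-- `F` is graphically Lipschitzian of dimension `n` at `zb` with transformation mapping `Φ`,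
local inverse `Ψ`, neighborhood `W`, and `K`-Lipschitz map `f : U → ℝ^n`. -/
def GraphLipWith (F : E n → Set (E n)) (zb : E2 n) (Φ Ψ : E2 n → E2 n)
    (W : Set (E2 n)) (U : Set (E n)) (f : E n → E n) (K : ℝ≥0) : Prop :=
  IsOpen W ∧ zb ∈ W ∧ ContDiffOn ℝ 1 Φ W ∧ Set.InjOn Φ W ∧ IsOpen (Φ '' W) ∧
  ContDiffOn ℝ 1 Ψ (Φ '' W) ∧ Set.LeftInvOn Ψ Φ W ∧
  IsOpen U ∧ LipschitzOnWith K f U ∧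
  Φ '' (gph F ∩ W) = {w | fst2 w ∈ U ∧ snd2 w = f (fst2 w)}

/-- `F` is graphically Lipschitzian of dimension `n` at `zb` with transformation mapping `Φ`. -/
def GraphLipAt (F : E n → Set (E n)) (zb : E2 n) (Φ : E2 n → E2 n) : Prop :=
  ∃ Ψ W U f K, GraphLipWith F zb Φ Ψ W U f K

/-- `∇̄^Φ F(x̄,ȳ)`: the `(2n)×n` matrices `Z` (as linear maps `ℝ^n → ℝ^{2n}`) with
`rge Z ∈ Sp F(x̄,ȳ)` and upper block of `∇Φ(x̄,ȳ)Z` equal to the identity. -/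
def BsubPhi (F : E n → Set (E n)) (zb : E2 n) (Φ : E2 n → E2 n) : Set (E n →L[ℝ] E2 n) :=
  {Z | LinearMap.range (Z : E n →ₗ[ℝ] E2 n) ∈ Sp F zb ∧ ∀ p, fst2 (fderiv ℝ Φ zb (Z p)) = p}

/-- A (globally) monotone set-valued map. -/
def MonoMap (T : E n → Set (E n)) : Prop :=
  ∀ x₁ y₁ x₂ y₂, y₁ ∈ T x₁ → y₂ ∈ T x₂ → 0 ≤ ⟪y₁ - y₂, x₁ - x₂⟫_ℝ

/-- `F` is locally maximally monotone at `z ∈ gph F`. -/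
def LocMaxMonoAt (F : E n → Set (E n)) (z : E2 n) : Prop :=
  ∃ X Y : Set (E n), IsOpen X ∧ IsOpen Y ∧ fst2 z ∈ X ∧ snd2 z ∈ Y ∧
    (∀ w₁ ∈ gph F ∩ {w | fst2 w ∈ X ∧ snd2 w ∈ Y},
     ∀ w₂ ∈ gph F ∩ {w | fst2 w ∈ X ∧ snd2 w ∈ Y},
       0 ≤ ⟪snd2 w₁ - snd2 w₂, fst2 w₁ - fst2 w₂⟫_ℝ) ∧
    ∀ T : E n → Set (E n), MonoMap T →
      gph F ∩ {w | fst2 w ∈ X ∧ snd2 w ∈ Y} ⊆ gph T →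
      gph F ∩ {w | fst2 w ∈ X ∧ snd2 w ∈ Y} = gph T ∩ {w | fst2 w ∈ X ∧ snd2 w ∈ Y}

/-- `F` is locally maximally hypomonotone at `z ∈ gph F`:
`γI + F` is locally maximally monotone at `(x, γx + y)` for some `γ ≥ 0`. -/
def LocMaxHypoAt (F : E n → Set (E n)) (z : E2 n) : Prop :=
  ∃ γ : ℝ, 0 ≤ γ ∧ LocMaxMonoAt (fun x => (fun y => γ • x + y) '' F x)
    (mk2 (fst2 z) (γ • fst2 z + snd2 z))

/-- A firmly nonexpansive matrix: `⟨Bv, v⟩ ≥ ‖Bv‖²` for all `v`. -/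
def FirmNonexp (B : E n →L[ℝ] E n) : Prop := ∀ v, ‖B v‖ ^ 2 ≤ ⟪B v, v⟫_ℝ


/-! ### Auxiliary lemmas for Statement 6 -/

section Aux

variable {n : ℕ}

lemma fst2_mk2 (u v : E n) : fst2 (mk2 u v) = u := rfl
lemma snd2_mk2 (u v : E n) : snd2 (mk2 u v) = v := rfl
lemma mk2_ext (z : E2 n) : mk2 (fst2 z) (snd2 z) = z := rfl
lemma graphMap_apply (A : E n →L[ℝ] E n) (u : E n) : graphMap A u = mk2 u (A u) := rfl
lemma fst2_add (z w : E2 n) : fst2 (z + w) = fst2 z + fst2 w := rfl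
lemma snd2_add (z w : E2 n) : snd2 (z + w) = snd2 z + snd2 w := rfl
lemma fst2_sub (z w : E2 n) : fst2 (z - w) = fst2 z - fst2 w := rfl
lemma snd2_sub (z w : E2 n) : snd2 (z - w) = snd2 z - snd2 w := rfl
lemma fst2_smul (c : ℝ) (z : E2 n) : fst2 (c • z) = c • fst2 z := rfl
lemma snd2_smul (c : ℝ) (z : E2 n) : snd2 (c • z) = c • snd2 z := rfl
lemma e2_ext {z w : E2 n} (h1 : fst2 z = fst2 w) (h2 : snd2 z = snd2 w) : z = w := by
  have : lp2 n z = lp2 n w := Prod.ext h1 h2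
  simpa using congrArg (lp2 n).symm this
lemma inner_e2 (z w : E2 n) : ⟪z, w⟫_ℝ = ⟪fst2 z, fst2 w⟫_ℝ + ⟪snd2 z, snd2 w⟫_ℝ :=
  WithLp.prod_inner_apply _ _
lemma norm_sq_e2 (w : E2 n) : ‖w‖ ^ 2 = ‖fst2 w‖ ^ 2 + ‖snd2 w‖ ^ 2 := by
  rw [← real_inner_self_eq_norm_sq, ← real_inner_self_eq_norm_sq,
    ← real_inner_self_eq_norm_sq, inner_e2]
lemma norm_fst2_le (w : E2 n) : ‖fst2 w‖ ≤ ‖w‖ := by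
  have h := norm_sq_e2 w
  nlinarith [norm_nonneg w, norm_nonneg (fst2 w), sq_nonneg ‖snd2 w‖]
lemma dist_fst2_le (z w : E2 n) : dist (fst2 z) (fst2 w) ≤ dist z w := by
  rw [dist_eq_norm, dist_eq_norm, ← fst2_sub]
  exact norm_fst2_le _

instance instCSE2 : ContinuousSMul ℝ (E2 n) := IsBoundedSMul.continuousSMul

def fst2L (n : ℕ) : E2 n →L[ℝ] E n :=
  LinearMap.toContinuousLinearMap ((LinearMap.fst ℝ (E n) (E n)).comp (lp2 n).toLinearMap)
def snd2L (n : ℕ) : E2 n →L[ℝ] E n :=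
  LinearMap.toContinuousLinearMap ((LinearMap.snd ℝ (E n) (E n)).comp (lp2 n).toLinearMap)
def mk2L (n : ℕ) : E n × E n →L[ℝ] E2 n :=
  LinearMap.toContinuousLinearMap (lp2 n).symm.toLinearMap
def inlL (n : ℕ) : E n →L[ℝ] E2 n :=
  LinearMap.toContinuousLinearMap ((lp2 n).symm.toLinearMap.comp (LinearMap.inl ℝ (E n) (E n)))
def inrL (n : ℕ) : E n →L[ℝ] E2 n :=
  LinearMap.toContinuousLinearMap ((lp2 n).symm.toLinearMap.comp (LinearMap.inr ℝ (E n) (E n)))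
lemma fst2L_apply (z : E2 n) : fst2L n z = fst2 z := rfl
lemma snd2L_apply (z : E2 n) : snd2L n z = snd2 z := rfl
lemma inl_add_inr (u v : E n) : inlL n u + inrL n v = mk2 u v := by
  apply (lp2 n).injective
  simp [inlL, inrL, mk2, map_add]

lemma tendsto_fst2 {α : Type*} {l : Filter α} {g : α → E2 n} {w : E2 n}
    (h : Tendsto g l (𝓝 w)) : Tendsto (fun k => fst2 (g k)) l (𝓝 (fst2 w)) :=
  ((fst2L n).continuous.tendsto w).comp h
lemma tendsto_snd2 {α : Type*} {l : Filter α} {g : α → E2 n} {w : E2 n}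
    (h : Tendsto g l (𝓝 w)) : Tendsto (fun k => snd2 (g k)) l (𝓝 (snd2 w)) :=
  ((snd2L n).continuous.tendsto w).comp h
lemma tendsto_mk2 {α : Type*} {l : Filter α} {a b : α → E n} {u v : E n}
    (ha : Tendsto a l (𝓝 u)) (hb : Tendsto b l (𝓝 v)) :
    Tendsto (fun k => mk2 (a k) (b k)) l (𝓝 (mk2 u v)) :=
  ((mk2L n).continuous.tendsto (u, v)).comp (ha.prodMk_nhds hb)
lemma mem_gph_sv {f : E n → E n} {U : Set (E n)} {z : E2 n} :
    z ∈ gph (sv f U) ↔ fst2 z ∈ U ∧ snd2 z = f (fst2 z) := Iff.rfl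

/-! #### The orthogonal projection onto `rgeIA A` and its continuity in `A` -/

def gmap (A : E n →L[ℝ] E n) : E n →L[ℝ] E2 n := inlL n + (inrL n).comp A
lemma gmap_apply (A : E n →L[ℝ] E n) (u : E n) : gmap A u = mk2 u (A u) := by
  simp [gmap, inl_add_inr]
lemma gmap_eq_graphMap (A : E n →L[ℝ] E n) (u : E n) : gmap A u = graphMap A u := by
  rw [gmap_apply]; rfl

def Tst (A : E n →L[ℝ] E n) : E2 n →L[ℝ] E n :=
  fst2L n + (ContinuousLinearMap.adjoint A).comp (snd2L n)
lemma Tst_apply (A : E n →L[ℝ] E n) (z : E2 n) :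
    Tst A z = fst2 z + ContinuousLinearMap.adjoint A (snd2 z) := by
  simp [Tst, fst2L_apply, snd2L_apply]
lemma inner_gmap (A : E n →L[ℝ] E n) (u : E n) (z : E2 n) :
    ⟪gmap A u, z⟫_ℝ = ⟪u, Tst A z⟫_ℝ := by
  rw [inner_e2, gmap_apply, fst2_mk2, snd2_mk2]
  simp only [Tst, ContinuousLinearMap.add_apply, ContinuousLinearMap.comp_apply,
    fst2L_apply, snd2L_apply, inner_add_right]
  rw [ContinuousLinearMap.adjoint_inner_right]

def SA (A : E n →L[ℝ] E n) : E n →L[ℝ] E n := 1 + (ContinuousLinearMap.adjoint A).comp A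
lemma Tst_gmap (A : E n →L[ℝ] E n) (u : E n) : Tst A (gmap A u) = SA A u := by
  simp [Tst, SA, gmap_apply, fst2L_apply, snd2L_apply, fst2_mk2, snd2_mk2]

lemma SA_isUnit (A : E n →L[ℝ] E n) : IsUnit (SA A) := by
  have hinj : Function.Injective (SA A) := by
    intro u v huv
    have h : SA A (u - v) = 0 := by simp [map_sub, huv]
    have h2 : ⟪SA A (u-v), u-v⟫_ℝ = 0 := by rw [h]; simp
    have h3 : ⟪SA A (u-v), u-v⟫_ℝ = ‖u-v‖^2 + ‖A (u-v)‖^2 := by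
      simp only [SA, ContinuousLinearMap.add_apply, ContinuousLinearMap.one_apply,
        ContinuousLinearMap.comp_apply, inner_add_left]
      rw [ContinuousLinearMap.adjoint_inner_left, real_inner_self_eq_norm_sq,
        real_inner_self_eq_norm_sq]
    have : ‖u - v‖ = 0 := by
      nlinarith [norm_nonneg (u-v), norm_nonneg (A (u-v)), sq_nonneg ‖A (u-v)‖]
    exact sub_eq_zero.mp (norm_eq_zero.mp this)
  have hsurj : Function.Surjective (SA A) :=
    (LinearMap.injective_iff_surjective (f := (SA A : E n →ₗ[ℝ] E n))).mp hinj
  let e := LinearEquiv.ofBijective (SA A : E n →ₗ[ℝ] E n) ⟨hinj, hsurj⟩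
  let ec := e.toContinuousLinearEquiv
  refine ⟨⟨SA A, ec.symm.toContinuousLinearMap, ?_, ?_⟩, rfl⟩
  · refine ContinuousLinearMap.ext fun u => ?_
    have : SA A (ec.symm u) = u := ec.apply_symm_apply u
    simpa [ContinuousLinearMap.mul_apply] using this
  · refine ContinuousLinearMap.ext fun u => ?_
    have : ec.symm (SA A u) = u := ec.symm_apply_apply u
    simpa [ContinuousLinearMap.mul_apply] using this

def PA (A : E n →L[ℝ] E n) : E2 n →L[ℝ] E2 n :=
  (gmap A).comp ((Ring.inverse (SA A)).comp (Tst A))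

lemma projC_rgeIA (A : E n →L[ℝ] E n) : projC (rgeIA A) = PA A := by
  ext z
  have hmem : PA A z ∈ rgeIA A := by
    rw [PA]; exact ⟨_, (gmap_eq_graphMap A _).symm⟩
  have hST : SA A * Ring.inverse (SA A) = 1 := Ring.mul_inverse_cancel _ (SA_isUnit A)
  have horth : ∀ w ∈ rgeIA A, ⟪z - PA A z, w⟫_ℝ = 0 := by
    rintro w ⟨u, rfl⟩
    rw [← gmap_eq_graphMap]
    rw [real_inner_comm, inner_sub_right, inner_gmap, inner_gmap]
    have : Tst A (PA A z) = Tst A z := by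
      rw [PA, ContinuousLinearMap.comp_apply, Tst_gmap]
      have := congrArg (fun (B : E n →L[ℝ] E n) => B (Tst A z)) hST
      simpa [ContinuousLinearMap.mul_apply] using this
    rw [this, sub_self]
  have := Submodule.eq_starProjection_of_mem_of_inner_eq_zero (K := rgeIA A) hmem horth
  simpa [projC] using this

lemma continuous_adjoint : Continuous (fun A : E n →L[ℝ] E n => ContinuousLinearMap.adjoint A) :=
  (ContinuousLinearMap.adjoint : (E n →L[ℝ] E n) ≃ₗᵢ[ℝ] _).continuous

lemma PA_continuousAt (A : E n →L[ℝ] E n) : ContinuousAt PA A := by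
  have hcomp2 : ∀ {α : Type} [TopologicalSpace α]
      {H1 H2 H3 : Type} [NormedAddCommGroup H1] [NormedSpace ℝ H1] [NormedAddCommGroup H2]
      [NormedSpace ℝ H2] [NormedAddCommGroup H3] [NormedSpace ℝ H3]
      {f : α → (H2 →L[ℝ] H3)} {g : α → (H1 →L[ℝ] H2)} {a : α},
      ContinuousAt f a → ContinuousAt g a → ContinuousAt (fun x => (f x).comp (g x)) a :=
    fun hf hg =>
      hf.clm_comp hg
  have hg : Continuous (fun B : E n →L[ℝ] E n => gmap B) := by
    apply continuous_const.add
    exact (isBoundedBilinearMap_comp (𝕜 := ℝ)).continuous.comp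
      (continuous_const.prodMk continuous_id)
  have hT : Continuous (fun B : E n →L[ℝ] E n => Tst B) := by
    apply continuous_const.add
    exact (isBoundedBilinearMap_comp (𝕜 := ℝ)).continuous.comp
      (continuous_adjoint.prodMk continuous_const)
  have hS : Continuous (fun B : E n →L[ℝ] E n => SA B) := by
    apply continuous_const.add
    exact (isBoundedBilinearMap_comp (𝕜 := ℝ)).continuous.comp
      (continuous_adjoint.prodMk continuous_id)
  have hinv : ContinuousAt (fun B : E n →L[ℝ] E n => Ring.inverse (SA B)) A := by
    obtain ⟨u, hu⟩ := SA_isUnit A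
    have h := NormedRing.inverse_continuousAt u
    rw [hu] at h
    exact h.comp hS.continuousAt
  exact hcomp2 hg.continuousAt (hcomp2 hinv hT.continuousAt)

lemma dZ_rgeIA_tendsto {Bk : ℕ → (E n →L[ℝ] E n)} {A : E n →L[ℝ] E n}
    (h : Tendsto Bk atTop (𝓝 A)) :
    Tendsto (fun k => dZ (rgeIA (Bk k)) (rgeIA A)) atTop (𝓝 0) := by
  have hP : Tendsto (fun k => PA (Bk k)) atTop (𝓝 (PA A)) := (PA_continuousAt A).tendsto.comp h
  have h0 : Tendsto (fun k => PA (Bk k) - PA A) atTop (𝓝 0) :=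
    tendsto_sub_nhds_zero_iff.mpr hP
  have hnrm := h0.norm
  simp only [norm_zero] at hnrm
  have heq : (fun k => dZ (rgeIA (Bk k)) (rgeIA A)) = fun k => ‖PA (Bk k) - PA A‖ := by
    funext k
    rw [dZ, projC_rgeIA, projC_rgeIA]
  rw [heq]
  exact hnrm

lemma projC_inj {L₁ L₂ : Submodule ℝ (E2 n)} (h : projC L₁ = projC L₂) : L₁ = L₂ := by
  ext z
  constructor
  · intro hz
    have h1 : projC L₁ z = z := (Submodule.starProjection_eq_self_iff (K := _)).mpr hz
    rw [h] at h1
    exact (Submodule.starProjection_eq_self_iff (K := _)).mp h1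
  · intro hz
    have h1 : projC L₂ z = z := (Submodule.starProjection_eq_self_iff (K := _)).mpr hz
    rw [← h] at h1
    exact (Submodule.starProjection_eq_self_iff (K := _)).mp h1

lemma finrank_rgeIA (A : E n →L[ℝ] E n) : Module.finrank ℝ (rgeIA A) = n := by
  have hinj : Function.Injective (graphMap A) := by
    intro u v huv
    have := congrArg fst2 huv
    rwa [graphMap_apply, graphMap_apply, fst2_mk2, fst2_mk2] at this
  rw [rgeIA, LinearMap.finrank_range_of_inj hinj, finrank_euclideanSpace_fin]

/-! #### The adjoint subspace of `rgeIA A` -/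

lemma Sneg_apply (z : E2 n) : Sneg n z = mk2 (-(snd2 z)) (fst2 z) := rfl

lemma mem_orthogonal_rgeIA {A : E n →L[ℝ] E n} {w : E2 n} :
    w ∈ (rgeIA A)ᗮ ↔ Tst A w = 0 := by
  rw [Submodule.mem_orthogonal]
  constructor
  · intro h
    have := h (graphMap A (Tst A w)) ⟨_, rfl⟩
    rw [← gmap_eq_graphMap, inner_gmap] at this
    exact inner_self_eq_zero.mp this
  · rintro h u ⟨p, rfl⟩
    rw [← gmap_eq_graphMap, inner_gmap, h, inner_zero_right]

lemma adjS_rgeIA (A : E n →L[ℝ] E n) :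
    adjS (rgeIA A) = rgeIA (ContinuousLinearMap.adjoint A) := by
  apply le_antisymm
  · rintro z hz
    obtain ⟨w, hw, rfl⟩ := Submodule.mem_map.mp hz
    have hT : Tst A w = 0 := mem_orthogonal_rgeIA.mp hw
    rw [Tst_apply] at hT
    refine ⟨-(snd2 w), ?_⟩
    rw [graphMap_apply, map_neg]
    show mk2 (-(snd2 w)) (-(ContinuousLinearMap.adjoint A (snd2 w))) = Sneg n w
    rw [Sneg_apply]
    congr 1
    linear_combination (norm := module) -hT
  · rintro z ⟨q, rfl⟩
    rw [graphMap_apply]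
    refine Submodule.mem_map.mpr ⟨mk2 (ContinuousLinearMap.adjoint A q) (-q), ?_, ?_⟩
    · rw [mem_orthogonal_rgeIA, Tst_apply, fst2_mk2, snd2_mk2, map_neg, add_neg_cancel]
    · show Sneg n _ = _
      rw [Sneg_apply, fst2_mk2, snd2_mk2, neg_neg]

end Aux

/-- Tangent cone to the graph at a point of differentiability. -/
lemma tcone_sv_of_diff {f : E n → E n} {U : Set (E n)} (hU : IsOpen U) {x' : E n}
    (hx' : x' ∈ U) (hd : DifferentiableAt ℝ f x') :
    tcone (gph (sv f U)) (mk2 x' (f x')) = (rgeIA (fderiv ℝ f x') : Set (E2 n)) := by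
  classical
  set A := fderiv ℝ f x' with hA
  have hlo : (fun h => f (x' + h) - f x' - A h) =o[𝓝 0] fun h => h :=
    hasFDerivAt_iff_isLittleO_nhds_zero.mp hd.hasFDerivAt
  ext w
  constructor
  · rintro ⟨t, wk, hpos, ht, hwk, hmem⟩
    set u := fst2 w with hu
    have huk : Tendsto (fun k => fst2 (wk k)) atTop (𝓝 u) := tendsto_fst2 hwk
    have hvk : Tendsto (fun k => snd2 (wk k)) atTop (𝓝 (snd2 w)) := tendsto_snd2 hwk
    have hm2 : ∀ k, f x' + t k • snd2 (wk k) = f (x' + t k • fst2 (wk k)) := by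
      intro k
      have := (hmem k).2
      simpa [fst2_add, snd2_add, fst2_smul, snd2_smul, fst2_mk2, snd2_mk2] using this
    have hhk : Tendsto (fun k => t k • fst2 (wk k)) atTop (𝓝 0) := by
      have := ht.smul huk
      simpa using this
    have key : Tendsto (fun k => snd2 (wk k) - A (fst2 (wk k))) atTop (𝓝 0) := by
      rw [NormedAddCommGroup.tendsto_nhds_zero]
      intro ε hε
      have hc : (0:ℝ) < ε / (2 * (‖u‖ + 1)) := by positivity
      have hev1 : ∀ᶠ k in atTop, ‖f (x' + t k • fst2 (wk k)) - f x' - A (t k • fst2 (wk k))‖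
          ≤ (ε / (2 * (‖u‖ + 1))) * ‖t k • fst2 (wk k)‖ := hhk.eventually (hlo.def hc)
      have hev2 : ∀ᶠ k in atTop, ‖fst2 (wk k)‖ < ‖u‖ + 1 :=
        (huk.norm.eventually (eventually_lt_nhds (lt_add_one ‖u‖)))
      filter_upwards [hev1, hev2] with k h1 h2
      have htk := hpos k
      have he : f (x' + t k • fst2 (wk k)) - f x' = t k • snd2 (wk k) := by
        rw [← hm2 k]; abel
      rw [he, map_smul, ← smul_sub, norm_smul, norm_smul] at h1
      have h1' : ‖snd2 (wk k) - A (fst2 (wk k))‖ ≤ (ε / (2 * (‖u‖ + 1))) * ‖fst2 (wk k)‖ := by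
        rw [Real.norm_eq_abs, abs_of_pos htk] at h1
        calc ‖snd2 (wk k) - A (fst2 (wk k))‖
            = (t k * ‖snd2 (wk k) - A (fst2 (wk k))‖) / t k := by field_simp
          _ ≤ ((ε / (2 * (‖u‖ + 1))) * (t k * ‖fst2 (wk k)‖)) / t k := by
              gcongr
          _ = (ε / (2 * (‖u‖ + 1))) * ‖fst2 (wk k)‖ := by field_simp
      calc ‖snd2 (wk k) - A (fst2 (wk k))‖ ≤ (ε / (2 * (‖u‖ + 1))) * ‖fst2 (wk k)‖ := h1'
        _ ≤ (ε / (2 * (‖u‖ + 1))) * (‖u‖ + 1) := by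
            apply mul_le_mul_of_nonneg_left h2.le hc.le
        _ = ε / 2 := by field_simp
        _ < ε := by linarith
    have hvlim : Tendsto (fun k => snd2 (wk k)) atTop (𝓝 (A u)) := by
      have := key.add ((A.continuous.tendsto u).comp huk)
      simpa using this
    have hsnd : snd2 w = A u := tendsto_nhds_unique hvk hvlim
    refine ⟨u, ?_⟩
    rw [graphMap_apply, ← hsnd, hu, mk2_ext]
  · rintro ⟨p, rfl⟩
    rw [graphMap_apply]
    set t : ℕ → ℝ := fun k => 1 / (k + 1 : ℝ) with htdef
    have hpos : ∀ k, 0 < t k := fun k => by positivity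
    have ht : Tendsto t atTop (𝓝 0) := tendsto_one_div_add_atTop_nhds_zero_nat
    have hxt : Tendsto (fun k => x' + t k • p) atTop (𝓝 x') := by
      have : Tendsto (fun k => t k • p) atTop (𝓝 0) := by
        simpa using ht.smul_const p
      simpa using (tendsto_const_nhds (x := x')).add this
    have hevU : ∀ᶠ k in atTop, x' + t k • p ∈ U := hxt.eventually (hU.eventually_mem hx')
    set dk : ℕ → E n := fun k => (t k)⁻¹ • (f (x' + t k • p) - f x') with hdk
    set wk : ℕ → E2 n := fun k => if x' + t k • p ∈ U then mk2 p (dk k) else 0 with hwkdef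
    have hdlim0 : Tendsto (fun k => dk k - A p) atTop (𝓝 0) := by
      rw [NormedAddCommGroup.tendsto_nhds_zero]
      intro ε hε
      have hc : (0:ℝ) < ε / (2 * (‖p‖ + 1)) := by positivity
      have hsm : Tendsto (fun k => t k • p) atTop (𝓝 0) := by simpa using ht.smul_const p
      have hev1 : ∀ᶠ k in atTop, ‖f (x' + t k • p) - f x' - A (t k • p)‖
          ≤ (ε / (2 * (‖p‖ + 1))) * ‖t k • p‖ := hsm.eventually (hlo.def hc)
      filter_upwards [hev1] with k h1
      have htk := hpos k
      have hrw : dk k - A p = (t k)⁻¹ • (f (x' + t k • p) - f x' - A (t k • p)) := by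
        have h0 : A (t k • p) = t k • A p := A.map_smul _ _
        rw [h0, smul_sub, smul_smul, inv_mul_cancel₀ (ne_of_gt htk), one_smul]
      rw [hrw, norm_smul, Real.norm_eq_abs, abs_of_pos (inv_pos.mpr htk)]
      calc (t k)⁻¹ * ‖f (x' + t k • p) - f x' - A (t k • p)‖
          ≤ (t k)⁻¹ * ((ε / (2 * (‖p‖ + 1))) * ‖t k • p‖) := by
            apply mul_le_mul_of_nonneg_left h1 (by positivity)
        _ = (t k)⁻¹ * ((ε / (2 * (‖p‖ + 1))) * (t k * ‖p‖)) := by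
            rw [norm_smul, Real.norm_eq_abs, abs_of_pos htk]
        _ = (ε / (2 * (‖p‖ + 1))) * ‖p‖ := by field_simp
        _ ≤ (ε / (2 * (‖p‖ + 1))) * (‖p‖ + 1) := by
            apply mul_le_mul_of_nonneg_left (by linarith) hc.le
        _ = ε / 2 := by field_simp
        _ < ε := by linarith
    have hdlim : Tendsto dk atTop (𝓝 (A p)) := by
      have := hdlim0.add (tendsto_const_nhds (x := A p))
      simpa using this
    refine ⟨t, wk, hpos, ht, ?_, ?_⟩
    · apply Tendsto.congr' ?_ (tendsto_mk2 (tendsto_const_nhds (x := p)) hdlim)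
      filter_upwards [hevU] with k hk
      rw [hwkdef]; simp [hk]
    · intro k
      rw [hwkdef]
      by_cases hk : x' + t k • p ∈ U
      · simp only [hk, if_true]
        refine mem_gph_sv.mpr ⟨?_, ?_⟩
        · simpa [fst2_add, fst2_smul, fst2_mk2, snd2_mk2] using hk
        · show snd2 _ = f (fst2 _)
          have h1 : fst2 (mk2 x' (f x') + t k • mk2 p (dk k)) = x' + t k • p := by
            simp [fst2_add, fst2_smul, fst2_mk2]
          have h2 : snd2 (mk2 x' (f x') + t k • mk2 p (dk k)) = f x' + t k • dk k := by
            simp [snd2_add, snd2_smul, snd2_mk2]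
          rw [h1, h2, hdk]
          rw [smul_inv_smul₀ (ne_of_gt (hpos k))]
          abel
      · simp only [hk, if_false]
        refine mem_gph_sv.mpr ⟨?_, ?_⟩ <;> simp [fst2_add, fst2_smul, snd2_add, snd2_smul,
          fst2_mk2, snd2_mk2, hx']


section Aux2
variable {n : ℕ}

set_option maxHeartbeats 1000000 in
/-- For a locally Lipschitz `f`, if the tangent cone to the graph at `x'` is an
`n`-dimensional subspace, then `f` is differentiable at `x'`. -/
lemma tcone_subspace_diff {f : E n → E n} {U : Set (E n)} {K : ℝ≥0} {x' : E n} {r : ℝ}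
    (hr : 0 < r) (hball : ball x' r ⊆ U) (hlip : LipschitzOnWith K f (ball x' r))
    {L : Submodule ℝ (E2 n)} (hrk : Module.finrank ℝ L = n)
    (hL : (L : Set (E2 n)) = tcone (gph (sv f U)) (mk2 x' (f x'))) :
    ∃ B : E n →L[ℝ] E n, DifferentiableAt ℝ f x' ∧ fderiv ℝ f x' = B ∧ L = rgeIA B ∧
      ‖B‖ ≤ K := by
  classical
  have hx'U : x' ∈ U := hball (mem_ball_self hr)
  -- Step (i): every element of L has ‖snd2 w‖ ≤ K * ‖fst2 w‖
  have step1 : ∀ w ∈ L, ‖snd2 w‖ ≤ (K : ℝ) * ‖fst2 w‖ := by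
    intro w hw
    have hwt : w ∈ tcone (gph (sv f U)) (mk2 x' (f x')) := by rw [← hL]; exact hw
    obtain ⟨t, wk, hpos, ht, hwk, hmem⟩ := hwt
    have huk : Tendsto (fun k => fst2 (wk k)) atTop (𝓝 (fst2 w)) := tendsto_fst2 hwk
    have hvk : Tendsto (fun k => snd2 (wk k)) atTop (𝓝 (snd2 w)) := tendsto_snd2 hwk
    have hm2 : ∀ k, f x' + t k • snd2 (wk k) = f (x' + t k • fst2 (wk k)) := by
      intro k
      have := (hmem k).2
      simpa [fst2_add, snd2_add, fst2_smul, snd2_smul, fst2_mk2, snd2_mk2] using this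
    have hxt : Tendsto (fun k => x' + t k • fst2 (wk k)) atTop (𝓝 x') := by
      have h0 : Tendsto (fun k => t k • fst2 (wk k)) atTop (𝓝 0) := by
        simpa using ht.smul huk
      simpa using (tendsto_const_nhds (x := x')).add h0
    have hevB : ∀ᶠ k in atTop, x' + t k • fst2 (wk k) ∈ ball x' r :=
      hxt.eventually (isOpen_ball.eventually_mem (mem_ball_self hr))
    have hev : ∀ᶠ k in atTop, ‖snd2 (wk k)‖ ≤ (K : ℝ) * ‖fst2 (wk k)‖ := by
      filter_upwards [hevB] with k hk
      have hd := hlip.dist_le_mul _ hk _ (mem_ball_self hr)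
      rw [dist_eq_norm, dist_eq_norm] at hd
      have he1 : f (x' + t k • fst2 (wk k)) - f x' = t k • snd2 (wk k) := by
        rw [← hm2 k]; abel
      have he2 : x' + t k • fst2 (wk k) - x' = t k • fst2 (wk k) := by abel
      rw [he1, he2, norm_smul, norm_smul, Real.norm_eq_abs, abs_of_pos (hpos k)] at hd
      have := hpos k
      calc ‖snd2 (wk k)‖ = t k * ‖snd2 (wk k)‖ / t k := by field_simp
        _ ≤ (K : ℝ) * (t k * ‖fst2 (wk k)‖) / t k := by gcongr
        _ = (K : ℝ) * ‖fst2 (wk k)‖ := by field_simp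
    exact le_of_tendsto_of_tendsto hvk.norm (tendsto_const_nhds.mul huk.norm) hev
  -- Step (ii): construct B with L = rgeIA B
  set π : L →ₗ[ℝ] E n := ((fst2L n : E2 n →L[ℝ] E n) : E2 n →ₗ[ℝ] E n).comp L.subtype with hπ
  have hπapp : ∀ w : L, π w = fst2 (w : E2 n) := fun w => rfl
  have hπinj : Function.Injective π := by
    intro a b hab
    have hab' : fst2 (a : E2 n) = fst2 (b : E2 n) := by
      rw [← hπapp, ← hπapp, hab]
    have h1 : fst2 ((a : E2 n) - (b : E2 n)) = 0 := by
      rw [fst2_sub, sub_eq_zero]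
      exact hab'
    have h2 : ‖snd2 ((a : E2 n) - (b : E2 n))‖ ≤ (K : ℝ) * ‖fst2 ((a : E2 n) - (b : E2 n))‖ :=
      step1 _ (L.sub_mem a.2 b.2)
    rw [h1, norm_zero, mul_zero] at h2
    have h3 : snd2 ((a : E2 n) - (b : E2 n)) = 0 := norm_le_zero_iff.mp h2
    apply Subtype.ext
    have h4 := e2_ext (z := (a : E2 n) - (b : E2 n)) (w := 0)
      (by rw [h1]; rfl) (by rw [h3]; rfl)
    exact sub_eq_zero.mp h4
  have hπsurj : Function.Surjective π := by
    rw [← LinearMap.range_eq_top]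
    apply Submodule.eq_top_of_finrank_eq
    rw [LinearMap.finrank_range_of_inj hπinj, hrk, finrank_euclideanSpace_fin]
  let eL := LinearEquiv.ofBijective π ⟨hπinj, hπsurj⟩
  set Blin : E n →ₗ[ℝ] E n :=
    ((snd2L n : E2 n →L[ℝ] E n) : E2 n →ₗ[ℝ] E n).comp
      (L.subtype.comp (eL.symm : E n →ₗ[ℝ] L)) with hBlin
  set B := LinearMap.toContinuousLinearMap Blin with hB
  have hBapp : ∀ u, B u = snd2 ((eL.symm u : L) : E2 n) := fun u => rfl
  have key1 : ∀ u, mk2 u (B u) ∈ L := by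
    intro u
    have hfst : fst2 ((eL.symm u : L) : E2 n) = u := by
      have := eL.apply_symm_apply u
      exact this
    have h0 : mk2 (fst2 ((eL.symm u : L) : E2 n)) (snd2 ((eL.symm u : L) : E2 n))
        = ((eL.symm u : L) : E2 n) := mk2_ext _
    rw [hfst] at h0
    rw [← hBapp u] at h0
    rw [h0]
    exact (eL.symm u : L).2
  have key2 : ∀ w ∈ L, snd2 w = B (fst2 w) := by
    intro w hw
    have h1 : π ⟨w, hw⟩ = π (eL.symm (fst2 w)) := by
      rw [hπapp, hπapp]
      have := eL.apply_symm_apply (fst2 w)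
      change fst2 ((eL.symm (fst2 w) : L) : E2 n) = fst2 w at this
      rw [this]
    have h2 := hπinj h1
    rw [hBapp]
    have := congrArg (fun a : L => snd2 (a : E2 n)) h2
    exact this
  have hLeq : L = rgeIA B := by
    ext z
    constructor
    · intro hz
      refine ⟨fst2 z, ?_⟩
      rw [graphMap_apply, ← key2 z hz, mk2_ext]
    · rintro ⟨u, rfl⟩
      rw [graphMap_apply]
      exact key1 u
  have hBnorm : ‖B‖ ≤ (K : ℝ) := by
    apply ContinuousLinearMap.opNorm_le_bound _ K.coe_nonneg
    intro u
    have := step1 _ (key1 u)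
    rwa [fst2_mk2, snd2_mk2] at this
  -- Step (iii): HasFDerivAt f B x'
  have hder : HasFDerivAt f B x' := by
    rw [hasFDerivAt_iff_isLittleO_nhds_zero, Asymptotics.isLittleO_iff]
    intro c hc
    by_contra hcon
    rw [Metric.eventually_nhds_iff] at hcon
    push_neg at hcon
    have hex : ∀ j : ℕ, ∃ h : E n, dist h 0 < min r (1 / (j + 1 : ℝ)) ∧
        c * ‖h‖ < ‖f (x' + h) - f x' - B h‖ :=
      fun j => hcon (min r (1 / (j + 1 : ℝ))) (lt_min hr (by positivity))
    choose h hsmall hfail using hex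
    have hne : ∀ j, h j ≠ 0 := by
      intro j hj
      have := hfail j
      rw [hj] at this
      simp at this
    set t : ℕ → ℝ := fun j => ‖h j‖ with htdef
    have hpos : ∀ j, 0 < t j := fun j => norm_pos_iff.mpr (hne j)
    have hmemball : ∀ j, x' + h j ∈ ball x' r := by
      intro j
      rw [mem_ball, dist_eq_norm]
      have := hsmall j
      rw [dist_zero_right] at this
      calc ‖x' + h j - x'‖ = ‖h j‖ := by rw [add_sub_cancel_left]
        _ < min r (1 / (j + 1 : ℝ)) := this
        _ ≤ r := min_le_left _ _
    set u : ℕ → E n := fun j => (t j)⁻¹ • h j with hu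
    set v : ℕ → E n := fun j => (t j)⁻¹ • (f (x' + h j) - f x') with hv
    have hnu : ∀ j, ‖u j‖ = 1 := by
      intro j
      rw [hu]
      simp only [norm_smul, Real.norm_eq_abs, abs_of_pos (inv_pos.mpr (hpos j))]
      rw [inv_mul_eq_div]
      exact div_self (ne_of_gt (hpos j))
    have hnv : ∀ j, ‖v j‖ ≤ (K : ℝ) := by
      intro j
      have hd := hlip.dist_le_mul _ (hmemball j) _ (mem_ball_self hr)
      rw [dist_eq_norm, dist_eq_norm, add_sub_cancel_left] at hd
      rw [hv]
      simp only [norm_smul, Real.norm_eq_abs, abs_of_pos (inv_pos.mpr (hpos j))]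
      rw [inv_mul_le_iff₀ (hpos j)]
      calc ‖f (x' + h j) - f x'‖ ≤ (K : ℝ) * ‖h j‖ := hd
        _ = (K : ℝ) * t j := rfl
        _ = t j * (K : ℝ) := by ring
    set w : ℕ → E2 n := fun j => mk2 (u j) (v j) with hw
    have hwball : ∀ j, w j ∈ closedBall (0 : E2 n) (1 + (K : ℝ)) := by
      intro j
      rw [mem_closedBall, dist_zero_right]
      have hsq : ‖w j‖ ^ 2 = ‖u j‖ ^ 2 + ‖v j‖ ^ 2 := norm_sq_e2 (w j)
      rw [hnu j] at hsq
      nlinarith [norm_nonneg (w j), K.coe_nonneg, hnv j, norm_nonneg (v j)]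
    obtain ⟨wstar, _, φ, hφ, hconv⟩ :=
      (isCompact_closedBall (0 : E2 n) (1 + (K : ℝ))).tendsto_subseq hwball
    have htφ : Tendsto (fun j => t (φ j)) atTop (𝓝 0) := by
      apply squeeze_zero (fun j => (hpos (φ j)).le) (g := fun j : ℕ => 1 / ((j : ℝ) + 1))
      · intro j
        have h1 : t (φ j) < min r (1 / ((φ j : ℝ) + 1)) := by
          have := hsmall (φ j)
          rwa [dist_zero_right] at this
        have h2 : (1 : ℝ) / ((φ j : ℝ) + 1) ≤ 1 / ((j : ℝ) + 1) := by
          apply one_div_le_one_div_of_le (by positivity)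
          have hj : (j : ℝ) ≤ (φ j : ℝ) := Nat.cast_le.mpr hφ.le_apply
          linarith
        exact le_trans (le_of_lt (lt_of_lt_of_le h1 (min_le_right _ _))) h2
      · exact tendsto_one_div_add_atTop_nhds_zero_nat
    have hmemt : ∀ j, mk2 x' (f x') + t (φ j) • w (φ j) ∈ gph (sv f U) := by
      intro j
      set i := φ j
      have hfst : fst2 (mk2 x' (f x') + t i • w i) = x' + h i := by
        rw [fst2_add, fst2_smul, fst2_mk2, hw]
        simp only [fst2_mk2]
        rw [hu, smul_inv_smul₀ (ne_of_gt (hpos i))]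
      have hsnd : snd2 (mk2 x' (f x') + t i • w i) = f (x' + h i) := by
        rw [snd2_add, snd2_smul, snd2_mk2, hw]
        simp only [snd2_mk2]
        rw [hv, smul_inv_smul₀ (ne_of_gt (hpos i))]
        abel
      refine mem_gph_sv.mpr ⟨?_, ?_⟩
      · rw [hfst]; exact hball (hmemball i)
      · rw [hfst, hsnd]
    have hwstarL : wstar ∈ L := by
      rw [← SetLike.mem_coe, hL]
      exact ⟨fun j => t (φ j), fun j => w (φ j), fun j => hpos (φ j), htφ, hconv, hmemt⟩
    have hzero : snd2 wstar - B (fst2 wstar) = 0 := by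
      rw [key2 wstar hwstarL, sub_self]
    have hlow : ∀ j, c ≤ ‖snd2 (w (φ j)) - B (fst2 (w (φ j)))‖ := by
      intro j
      set i := φ j
      have hiv : snd2 (w i) - B (fst2 (w i)) = (t i)⁻¹ • (f (x' + h i) - f x' - B (h i)) := by
        rw [hw]
        simp only [fst2_mk2, snd2_mk2]
        rw [hu, hv, map_smul, ← smul_sub]
      have hge : c * ‖h i‖ < ‖f (x' + h i) - f x' - B (h i)‖ := hfail i
      rw [hiv, norm_smul, Real.norm_eq_abs, abs_of_pos (inv_pos.mpr (hpos i))]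
      rw [le_inv_mul_iff₀ (hpos i)]
      calc t i * c = c * ‖h i‖ := by rw [htdef]; ring
        _ ≤ ‖f (x' + h i) - f x' - B (h i)‖ := hge.le
    have hnorml : Tendsto (fun j => ‖snd2 (w (φ j)) - B (fst2 (w (φ j)))‖) atTop
        (𝓝 ‖snd2 wstar - B (fst2 wstar)‖) := by
      apply Tendsto.norm
      exact (tendsto_snd2 hconv).sub ((B.continuous.tendsto _).comp (tendsto_fst2 hconv))
    rw [hzero, norm_zero] at hnorml
    have : c ≤ 0 := ge_of_tendsto hnorml (Eventually.of_forall hlow)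
    linarith
  exact ⟨B, hder.differentiableAt, hder.fderiv, hLeq, hBnorm⟩

end Aux2


section Aux3
variable {n : ℕ}

lemma rgeIA_mem_Sp {f : E n → E n} {U : Set (E n)} (hU : IsOpen U) {x : E n} (hx : x ∈ U)
    (hCx : ContinuousAt f x) {A : E n →L[ℝ] E n} (hA : A ∈ Bsub f U x) :
    rgeIA A ∈ Sp (sv f U) (mk2 x (f x)) := by
  obtain ⟨xk, hk, hxk, hfd⟩ := hA
  refine ⟨finrank_rgeIA A, fun k => mk2 (xk k) (f (xk k)),
    fun k => rgeIA (fderiv ℝ f (xk k)), ?_, ?_, ?_⟩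
  · intro k
    exact ⟨mem_gph_sv.mpr ⟨by rw [fst2_mk2]; exact (hk k).1, by rw [fst2_mk2, snd2_mk2]⟩,
      finrank_rgeIA _, (tcone_sv_of_diff hU (hk k).1 (hk k).2).symm⟩
  · exact tendsto_mk2 hxk (hCx.tendsto.comp hxk)
  · exact dZ_rgeIA_tendsto hfd

/-- Rademacher: a somewhere-Lipschitz map has a nonempty B-subdifferential. -/
lemma exists_Bsub {f : E n → E n} {U : Set (E n)} {K : ℝ≥0} {x : E n} {ρ : ℝ}
    (hρ : 0 < ρ) (hball : ball x ρ ⊆ U) (hlip : LipschitzOnWith K f (ball x ρ)) :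
    ∃ A, A ∈ Bsub f U x := by
  have hae := hlip.ae_differentiableWithinAt_of_mem (μ := MeasureTheory.volume)
  rw [MeasureTheory.ae_iff] at hae
  have hpt : ∀ j : ℕ, ∃ y, y ∈ ball x (min ρ (1/(j+1:ℝ))) ∧ DifferentiableAt ℝ f y := by
    intro j
    have hrpos : 0 < min ρ (1/(j+1:ℝ)) := lt_min hρ (by positivity)
    by_contra hno
    push_neg at hno
    have hsub : ball x (min ρ (1/(j+1:ℝ))) ⊆
        {y | ¬ (y ∈ ball x ρ → DifferentiableWithinAt ℝ f (ball x ρ) y)} := by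
      intro y hy hgood
      have hyρ : y ∈ ball x ρ := ball_subset_ball (min_le_left _ _) hy
      have hd : DifferentiableWithinAt ℝ f (ball x ρ) y := hgood hyρ
      exact hno y hy (hd.differentiableAt (isOpen_ball.mem_nhds hyρ))
    have h0 : MeasureTheory.volume (ball x (min ρ (1/(j+1:ℝ)))) = 0 :=
      MeasureTheory.measure_mono_null hsub hae
    exact absurd h0 (ne_of_gt (measure_ball_pos _ _ hrpos))
  choose xk hxk1 hxk2 using hpt
  have hxktend : Tendsto xk atTop (𝓝 x) := by
    rw [tendsto_iff_dist_tendsto_zero]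
    apply squeeze_zero (fun j => dist_nonneg) (g := fun j : ℕ => 1 / ((j : ℝ) + 1))
    · intro j
      have := mem_ball.mp (hxk1 j)
      exact le_of_lt (lt_of_lt_of_le this (min_le_right _ _))
    · exact tendsto_one_div_add_atTop_nhds_zero_nat
  have hfdb : ∀ j, fderiv ℝ f (xk j) ∈ closedBall (0 : E n →L[ℝ] E n) K := by
    intro j
    rw [mem_closedBall_zero_iff]
    exact norm_fderiv_le_of_lipschitzOn ℝ
      (isOpen_ball.mem_nhds (ball_subset_ball (min_le_left _ _) (hxk1 j))) hlip
  obtain ⟨A, _, φ, hφ, hconv⟩ := (isCompact_closedBall _ _).tendsto_subseq hfdb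
  refine ⟨A, fun j => xk (φ j), fun j =>
    ⟨hball (ball_subset_ball (min_le_left _ _) (hxk1 (φ j))), hxk2 (φ j)⟩,
    hxktend.comp hφ.tendsto_atTop, hconv⟩

lemma Sp_nonempty_of_lip {f : E n → E n} {U : Set (E n)} {K : ℝ≥0} {x' : E n} {r : ℝ}
    (hU : IsOpen U) (hr : 0 < r) (hball : ball x' r ⊆ U)
    (hlip : LipschitzOnWith K f (ball x' r)) :
    (Sp (sv f U) (mk2 x' (f x'))).Nonempty := by
  obtain ⟨A, hA⟩ := exists_Bsub hr hball hlip
  have hc : ContinuousAt f x' :=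
    hlip.continuousOn.continuousAt (isOpen_ball.mem_nhds (mem_ball_self hr))
  exact ⟨rgeIA A, rgeIA_mem_Sp hU (hball (mem_ball_self hr)) hc hA⟩

set_option maxHeartbeats 1000000 in
lemma Sp_subset_of_lip {f : E n → E n} {U : Set (E n)} {K : ℝ≥0} {x : E n} {ρ : ℝ}
    (hU : IsOpen U) (hx : x ∈ U) (hρ : 0 < ρ)
    (hball : ball x ρ ⊆ U) (hlip : LipschitzOnWith K f (ball x ρ)) :
    ∀ L ∈ Sp (sv f U) (mk2 x (f x)), ∃ A ∈ Bsub f U x, L = rgeIA A := by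
  rintro L ⟨hrkL, zk, Lk, hk, hz, hdZ⟩
  set xk := fun k => fst2 (zk k) with hxkdef
  have hxkU : ∀ k, xk k ∈ U := fun k => (mem_gph_sv.mp (hk k).1).1
  have hxk : Tendsto xk atTop (𝓝 x) := by
    have := tendsto_fst2 hz; rwa [fst2_mk2] at this
  have hev : ∀ᶠ k in atTop, xk k ∈ ball x (ρ/2) :=
    hxk.eventually (isOpen_ball.eventually_mem (mem_ball_self (by linarith)))
  obtain ⟨N, hN⟩ := eventually_atTop.mp hev
  have hexB : ∀ k, ∃ B : E n →L[ℝ] E n, N ≤ k →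
      DifferentiableAt ℝ f (xk k) ∧ fderiv ℝ f (xk k) = B ∧ Lk k = rgeIA B ∧ ‖B‖ ≤ K := by
    intro k
    by_cases hkN : N ≤ k
    · have hmem := hN k hkN
      have hsub : ball (xk k) (ρ/2) ⊆ ball x ρ := by
        intro y hy
        rw [mem_ball] at *
        calc dist y x ≤ dist y (xk k) + dist (xk k) x := dist_triangle _ _ _
          _ < ρ/2 + ρ/2 := add_lt_add hy hmem
          _ = ρ := by ring
      have hfk : snd2 (zk k) = f (xk k) := (mem_gph_sv.mp (hk k).1).2
      have htc : (Lk k : Set (E2 n)) = tcone (gph (sv f U)) (mk2 (xk k) (f (xk k))) := by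
        rw [(hk k).2.2]
        congr 1
        rw [← hfk, hxkdef, mk2_ext]
      obtain ⟨B, h1, h2, h3, h4⟩ := tcone_subspace_diff (half_pos hρ) (hsub.trans hball)
        (hlip.mono hsub) (hk k).2.1 htc
      exact ⟨B, fun _ => ⟨h1, h2, h3, h4⟩⟩
    · exact ⟨0, fun h => absurd h hkN⟩
  choose Bk hBk using hexB
  have hmemB : ∀ j, Bk (N + j) ∈ closedBall (0 : E n →L[ℝ] E n) K := fun j =>
    mem_closedBall_zero_iff.mpr (hBk (N + j) (Nat.le_add_right _ _)).2.2.2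
  obtain ⟨A, _, φ, hφ, hconv⟩ := (isCompact_closedBall _ _).tendsto_subseq hmemB
  set σ : ℕ → ℕ := fun j => N + φ j with hσ
  have hσt : Tendsto σ atTop atTop :=
    tendsto_atTop_mono (fun j => Nat.le_add_left _ _) hφ.tendsto_atTop
  have hconv' : Tendsto (fun j => Bk (σ j)) atTop (𝓝 A) := hconv
  have hAmem : A ∈ Bsub f U x := by
    refine ⟨fun j => xk (σ j), fun j => ⟨hxkU _, (hBk (σ j) (Nat.le_add_right _ _)).1⟩,
      hxk.comp hσt, ?_⟩
    exact hconv'.congr (fun j => ((hBk (σ j) (Nat.le_add_right _ _)).2.1).symm)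
  refine ⟨A, hAmem, ?_⟩
  have hd1 : Tendsto (fun j => dZ (Lk (σ j)) L) atTop (𝓝 0) := hdZ.comp hσt
  have hd2 : Tendsto (fun j => dZ (rgeIA (Bk (σ j))) (rgeIA A)) atTop (𝓝 0) :=
    dZ_rgeIA_tendsto hconv'
  have hle : ∀ j, ‖projC (rgeIA A) - projC L‖ ≤
      dZ (rgeIA (Bk (σ j))) (rgeIA A) + dZ (Lk (σ j)) L := by
    intro j
    have hLk : Lk (σ j) = rgeIA (Bk (σ j)) := (hBk (σ j) (Nat.le_add_right _ _)).2.2.1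
    rw [dZ, dZ, hLk]
    have htri := dist_triangle (projC (rgeIA A)) (projC (rgeIA (Bk (σ j)))) (projC L)
    rw [dist_eq_norm, dist_eq_norm, dist_eq_norm] at htri
    calc ‖projC (rgeIA A) - projC L‖
        ≤ ‖projC (rgeIA A) - projC (rgeIA (Bk (σ j)))‖
            + ‖projC (rgeIA (Bk (σ j))) - projC L‖ := htri
      _ = ‖projC (rgeIA (Bk (σ j))) - projC (rgeIA A)‖
            + ‖projC (rgeIA (Bk (σ j))) - projC L‖ := by rw [norm_sub_rev]
  have h0 : ‖projC (rgeIA A) - projC L‖ ≤ 0 := by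
    have hsum : Tendsto (fun j => dZ (rgeIA (Bk (σ j))) (rgeIA A) + dZ (Lk (σ j)) L)
        atTop (𝓝 0) := by simpa using hd2.add hd1
    exact ge_of_tendsto hsum (Eventually.of_forall hle)
  have hPq : projC (rgeIA A) = projC L := by
    have h1 := le_antisymm h0 (norm_nonneg _)
    rwa [norm_eq_zero, sub_eq_zero] at h1
  exact (projC_inj hPq).symm

end Aux3

/- STATEMENT 6 -/
theorem stmt6 (n : ℕ) (U : Set (E n)) (hU : IsOpen U) (f : E n → E n) (x : E n) (hx : x ∈ U)
    (hcont : ContinuousOn f U) :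
    ({L | ∃ A ∈ Bsub f U x, L = rgeIA A} ⊆ Sp (sv f U) (mk2 x (f x))) ∧
    ({L | ∃ A ∈ Bsub f U x, L = rgeIA (ContinuousLinearMap.adjoint A)} ⊆
        SpStar (sv f U) (mk2 x (f x))) ∧
    (∀ (K : ℝ≥0) (ρ : ℝ), 0 < ρ → Metric.ball x ρ ⊆ U → LipschitzOnWith K f (Metric.ball x ρ) →
      Sp (sv f U) (mk2 x (f x)) = {L | ∃ A ∈ Bsub f U x, L = rgeIA A} ∧
      SpStar (sv f U) (mk2 x (f x)) =
        {L | ∃ A ∈ Bsub f U x, L = rgeIA (ContinuousLinearMap.adjoint A)} ∧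
      (Sp (sv f U) (mk2 x (f x))).Nonempty ∧
      SCDAround (sv f U) (mk2 x (f x))) := by
  have hCx : ContinuousAt f x := hcont.continuousAt (hU.mem_nhds hx)
  have part1 : {L | ∃ A ∈ Bsub f U x, L = rgeIA A} ⊆ Sp (sv f U) (mk2 x (f x)) := by
    rintro L ⟨A, hA, rfl⟩
    exact rgeIA_mem_Sp hU hx hCx hA
  have part2 : {L | ∃ A ∈ Bsub f U x, L = rgeIA (ContinuousLinearMap.adjoint A)} ⊆
      SpStar (sv f U) (mk2 x (f x)) := by
    rintro L ⟨A, hA, rfl⟩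
    exact ⟨rgeIA A, rgeIA_mem_Sp hU hx hCx hA, (adjS_rgeIA A).symm⟩
  refine ⟨part1, part2, ?_⟩
  intro K ρ hρ hball hlip
  have heq1 : Sp (sv f U) (mk2 x (f x)) = {L | ∃ A ∈ Bsub f U x, L = rgeIA A} :=
    Set.Subset.antisymm (fun L hL => Sp_subset_of_lip hU hx hρ hball hlip L hL) part1
  refine ⟨heq1, ?_, ?_, ?_⟩
  · ext L'
    constructor
    · rintro ⟨L, hL, rfl⟩
      rw [heq1] at hL
      obtain ⟨A, hA, rfl⟩ := hL
      exact ⟨A, hA, adjS_rgeIA A⟩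
    · exact fun h => part2 h
  · obtain ⟨A, hA⟩ := exists_Bsub hρ hball hlip
    exact ⟨rgeIA A, part1 ⟨A, hA, rfl⟩⟩
  · refine ⟨ρ/2, half_pos hρ, ?_⟩
    intro z' hz' hd
    obtain ⟨hz'U, hz'f⟩ := mem_gph_sv.mp hz'
    have hz'b : fst2 z' ∈ ball x (ρ/2) := by
      rw [mem_ball]
      calc dist (fst2 z') x = dist (fst2 z') (fst2 (mk2 x (f x))) := by rw [fst2_mk2]
        _ ≤ dist z' (mk2 x (f x)) := dist_fst2_le _ _
        _ < ρ/2 := hd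
    have hsub : ball (fst2 z') (ρ/2) ⊆ ball x ρ := by
      intro y hy
      rw [mem_ball] at *
      calc dist y x ≤ dist y (fst2 z') + dist (fst2 z') x := dist_triangle _ _ _
        _ < ρ/2 + ρ/2 := add_lt_add hy hz'b
        _ = ρ := by ring
    have hne := Sp_nonempty_of_lip hU (half_pos hρ) (hsub.trans hball) (hlip.mono hsub)
    have hz'eq : z' = mk2 (fst2 z') (f (fst2 z')) := by
      rw [← hz'f, mk2_ext]
    rw [SCDAt, hz'eq]
    exact hne

end SCD
end
end

section
/- If F : ℝ^n ⇒ ℝ^n is SCD regular around (x, y) ∈ gph F, then scd reg F(x, y) < ∞. -/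
open Filter Topology Metric Set
open scoped InnerProductSpace RealInnerProductSpace ENNReal NNReal

noncomputable section

namespace SCD

variable {n : ℕ}

/- Auxiliary lemmas for Statement 12 -/

set_option maxHeartbeats 1000000
set_option synthInstance.maxHeartbeats 1000000

section Aux

variable {n : ℕ}

lemma aux_norm_fst2_le (z : E2 n) : ‖fst2 z‖ ≤ ‖z‖ := by
  have h : ‖z‖ ^ 2 = ‖fst2 z‖ ^ 2 + ‖snd2 z‖ ^ 2 := WithLp.prod_norm_sq_eq_of_L2 z
  nlinarith [norm_nonneg (snd2 z), norm_nonneg z, norm_nonneg (fst2 z)]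

lemma aux_continuous_snd2 : Continuous (snd2 : E2 n → E n) :=
  ((lp2 n).toLinearMap.continuous_of_finiteDimensional).snd

lemma aux_continuous_snegsymm : Continuous ((Sneg n).symm : E2 n → E2 n) :=
  (Sneg n).symm.toLinearMap.continuous_of_finiteDimensional

lemma aux_projC_mem (L : Submodule ℝ (E2 n)) (x : E2 n) : projC L x ∈ L :=
  (L.orthogonalProjectionOnto x).2

lemma aux_projC_of_mem (L : Submodule ℝ (E2 n)) {x : E2 n} (hx : x ∈ L) : projC L x = x := by
  have : L.orthogonalProjectionOnto x = ⟨x, hx⟩ := Submodule.orthogonalProjectionOnto_mem_subspace_eq_self ⟨x, hx⟩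
  simp [projC, this]

lemma aux_projC_idem (L : Submodule ℝ (E2 n)) (x : E2 n) : projC L (projC L x) = projC L x :=
  aux_projC_of_mem L (aux_projC_mem L x)

lemma aux_projC_symm (L : Submodule ℝ (E2 n)) (x y : E2 n) :
    ⟪projC L x, y⟫_ℝ = ⟪x, projC L y⟫_ℝ := by
  exact L.inner_starProjection_left_eq_right x y

lemma aux_projC_eq_zero_iff (L : Submodule ℝ (E2 n)) (x : E2 n) :
    projC L x = 0 ↔ x ∈ Lᗮ := by
  rw [projC]; simp only [ContinuousLinearMap.comp_apply]
  rw [show (L.subtypeL (L.orthogonalProjectionOnto x) = 0) ↔ (L.orthogonalProjectionOnto x = 0) from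
    Submodule.coe_eq_zero]
  exact Submodule.orthogonalProjectionOnto_eq_zero_iff

lemma aux_projC_norm_le (L : Submodule ℝ (E2 n)) : ‖projC L‖ ≤ 1 := by
  apply ContinuousLinearMap.opNorm_le_bound _ zero_le_one
  intro x
  calc ‖projC L x‖ = ‖L.orthogonalProjectionOnto x‖ := rfl
    _ ≤ ‖L.orthogonalProjectionOnto‖ * ‖x‖ := (L.orthogonalProjectionOnto).le_opNorm x
    _ ≤ 1 * ‖x‖ := by gcongr; exact Submodule.orthogonalProjectionOnto_norm_le (K := L)

lemma aux_projC_range (Q : E2 n →L[ℝ] E2 n) (hidem : ∀ x, Q (Q x) = Q x)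
    (hsymm : ∀ x y, ⟪Q x, y⟫_ℝ = ⟪x, Q y⟫_ℝ) :
    projC (LinearMap.range (Q : E2 n →ₗ[ℝ] E2 n)) = Q := by
  set M := LinearMap.range (Q : E2 n →ₗ[ℝ] E2 n)
  ext x
  show M.starProjection x = Q x
  apply Submodule.eq_starProjection_of_mem_orthogonal
  · exact ⟨x, rfl⟩
  · rw [Submodule.mem_orthogonal]
    rintro u ⟨w, rfl⟩
    show ⟪Q w, x - Q x⟫_ℝ = 0
    rw [real_inner_comm, ← hsymm (x - Q x) w]
    simp [map_sub, hidem, inner_sub_left]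

/-- The trace functional on continuous linear endomorphisms. -/
def trC (n : ℕ) : (E2 n →L[ℝ] E2 n) →ₗ[ℝ] ℝ :=
  (LinearMap.trace ℝ (E2 n)).comp (ContinuousLinearMap.coeLM ℝ)

lemma aux_trC_cont : Continuous (trC n) := (trC n).continuous_of_finiteDimensional

lemma aux_trC_projC (L : Submodule ℝ (E2 n)) :
    trC n (projC L) = (Module.finrank ℝ L : ℝ) := by
  have hproj : LinearMap.IsProj L ((projC L : E2 n →ₗ[ℝ] E2 n)) := by
    constructor
    · intro x; exact aux_projC_mem L x
    · intro x hx; exact aux_projC_of_mem L hx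
  exact hproj.trace

lemma aux_dZ_nonneg (A B : Submodule ℝ (E2 n)) : 0 ≤ dZ A B := norm_nonneg _

lemma aux_dZ_triangle (A B C : Submodule ℝ (E2 n)) : dZ A C ≤ dZ A B + dZ B C := by
  simpa [dZ, ← dist_eq_norm] using dist_triangle (projC A) (projC B) (projC C)

lemma aux_inv_tendsto : Tendsto (fun k : ℕ => ((k : ℝ) + 1)⁻¹) atTop (𝓝 0) := by
  simpa [one_div] using tendsto_one_div_add_atTop_nhds_zero_nat (𝕜 := ℝ)

lemma aux_tendsto_apply {Q : ℕ → E2 n →L[ℝ] E2 n} {Ql : E2 n →L[ℝ] E2 n}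
    {x : ℕ → E2 n} {xl : E2 n} (hQ : Tendsto Q atTop (𝓝 Ql)) (hx : Tendsto x atTop (𝓝 xl)) :
    Tendsto (fun k => Q k (x k)) atTop (𝓝 (Ql xl)) :=
  ((isBoundedBilinearMap_apply (𝕜 := ℝ)).continuous.tendsto (Ql, xl)).comp (hQ.prodMk_nhds hx)

lemma aux_sp_closed {F : E n → Set (E n)} {z : E2 n} {L : ℕ → Submodule ℝ (E2 n)}
    (hL : ∀ k, L k ∈ Sp F z) {M : Submodule ℝ (E2 n)} (hM : Module.finrank ℝ M = n)
    (hd : Tendsto (fun k => dZ (L k) M) atTop (𝓝 0)) : M ∈ Sp F z := by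
  have key : ∀ k : ℕ, ∃ (w : E2 n) (T : Submodule ℝ (E2 n)),
      (w ∈ gph F ∧ Module.finrank ℝ T = n ∧ (T : Set (E2 n)) = tcone (gph F) w) ∧
      dist w z < ((k : ℝ) + 1)⁻¹ ∧ dZ T (L k) < ((k : ℝ) + 1)⁻¹ := by
    intro k
    obtain ⟨-, zk, Tk, hprop, hzt, hdt⟩ := hL k
    have hε : (0 : ℝ) < ((k : ℝ) + 1)⁻¹ := by positivity
    obtain ⟨N1, hN1⟩ := Metric.tendsto_atTop.mp hzt _ hε
    obtain ⟨N2, hN2⟩ := Metric.tendsto_atTop.mp hdt _ hε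
    refine ⟨zk (max N1 N2), Tk (max N1 N2), hprop (max N1 N2),
      hN1 (max N1 N2) (le_max_left _ _), ?_⟩
    have h2 := hN2 (max N1 N2) (le_max_right _ _)
    rw [Real.dist_eq, sub_zero] at h2
    exact lt_of_le_of_lt (le_abs_self _) h2
  choose w T hprop hdist hdZ' using key
  refine ⟨hM, w, T, hprop, ?_, ?_⟩
  · rw [tendsto_iff_dist_tendsto_zero]
    exact squeeze_zero (fun k => dist_nonneg) (fun k => (hdist k).le) aux_inv_tendsto
  · have hbound : ∀ k : ℕ, dZ (T k) M ≤ ((k : ℝ) + 1)⁻¹ + dZ (L k) M := by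
      intro k
      calc dZ (T k) M ≤ dZ (T k) (L k) + dZ (L k) M := aux_dZ_triangle _ _ _
        _ ≤ _ := add_le_add_left (hdZ' k).le _
    have hlim : Tendsto (fun k : ℕ => ((k : ℝ) + 1)⁻¹ + dZ (L k) M) atTop (𝓝 0) := by
      simpa using aux_inv_tendsto.add hd
    exact squeeze_zero (fun k => aux_dZ_nonneg _ _) hbound hlim

end Aux

/- STATEMENT 12 -/
theorem stmt12 (n : ℕ) (F : E n → Set (E n)) (z : E2 n) (hz : z ∈ gph F)
    (hreg : SCDRegularAround F z) :
    BddAbove (scdregSet F z) := by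
  by_contra hnb
  rw [not_bddAbove_iff] at hnb
  have H : ∀ k : ℕ, ∃ (L : Submodule ℝ (E2 n)) (w : E2 n),
      L ∈ Sp F z ∧ w ∈ adjS L ∧ ‖snd2 w‖ ≤ 1 ∧ ((k : ℝ) + 1) < ‖fst2 w‖ := by
    intro k
    obtain ⟨r, ⟨L', ⟨L0, hL0, rfl⟩, w0, hw0, hw1, rfl⟩, hlt⟩ := hnb ((k : ℝ) + 1)
    exact ⟨L0, w0, hL0, hw0, hw1, hlt⟩
  choose L w hLSp hwadj hwsnd hwbig using H
  have hk1 : ∀ k : ℕ, ((k : ℝ) + 1) ≤ ‖w k‖ :=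
    fun k => le_trans (hwbig k).le (aux_norm_fst2_le _)
  have hwpos : ∀ k, 0 < ‖w k‖ := fun k => lt_of_lt_of_le (by positivity) (hk1 k)
  set u : ℕ → E2 n := fun k => ‖w k‖⁻¹ • w k with hu_def
  have hu1 : ∀ k, ‖u k‖ = 1 := fun k => norm_smul_inv_norm (norm_pos_iff.mp (hwpos k))
  have huadj : ∀ k, u k ∈ adjS (L k) := fun k => Submodule.smul_mem _ _ (hwadj k)
  have husnd : ∀ k, ‖snd2 (u k)‖ ≤ ((k : ℝ) + 1)⁻¹ := by
    intro k
    have h1 : snd2 (u k) = ‖w k‖⁻¹ • snd2 (w k) := rfl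
    have hinv : ‖w k‖⁻¹ ≤ ((k : ℝ) + 1)⁻¹ := by
      apply inv_anti₀ (by positivity) (hk1 k)
    calc ‖snd2 (u k)‖ = ‖w k‖⁻¹ * ‖snd2 (w k)‖ := by
          rw [h1, norm_smul, Real.norm_eq_abs, abs_of_nonneg (by positivity)]
      _ ≤ ‖w k‖⁻¹ * 1 := by
          exact mul_le_mul_of_nonneg_left (hwsnd k) (by positivity)
      _ ≤ ((k : ℝ) + 1)⁻¹ := by rw [mul_one]; exact hinv
  -- compactness extraction
  have hcomp : IsCompact ((closedBall (0 : E2 n →L[ℝ] E2 n) 1) ×ˢ (closedBall (0 : E2 n) 1)) :=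
    (isCompact_closedBall _ _).prod (isCompact_closedBall _ _)
  have hmemseq : ∀ k, ((projC (L k), u k) : (E2 n →L[ℝ] E2 n) × E2 n) ∈
      (closedBall (0 : E2 n →L[ℝ] E2 n) 1) ×ˢ (closedBall (0 : E2 n) 1) := by
    intro k
    constructor
    · exact mem_closedBall_zero_iff.mpr (aux_projC_norm_le (L k))
    · exact mem_closedBall_zero_iff.mpr (le_of_eq (hu1 k))
  obtain ⟨⟨Qlim, ulim⟩, -, φ, hφ, hconv⟩ := hcomp.tendsto_subseq hmemseq
  have hQ : Tendsto (fun j => projC (L (φ j))) atTop (𝓝 Qlim) :=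
    (continuous_fst.tendsto _).comp hconv
  have hu : Tendsto (fun j => u (φ j)) atTop (𝓝 ulim) :=
    (continuous_snd.tendsto _).comp hconv
  -- Qlim is a symmetric idempotent
  have hQidem : ∀ x, Qlim (Qlim x) = Qlim x := by
    intro x
    have h1 : Tendsto (fun j => projC (L (φ j)) (projC (L (φ j)) x)) atTop
        (𝓝 (Qlim (Qlim x))) :=
      aux_tendsto_apply hQ (aux_tendsto_apply hQ tendsto_const_nhds)
    have h2 : (fun j => projC (L (φ j)) (projC (L (φ j)) x)) =
        fun j => projC (L (φ j)) x := funext fun j => aux_projC_idem _ x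
    rw [h2] at h1
    exact tendsto_nhds_unique h1 (aux_tendsto_apply hQ tendsto_const_nhds)
  have hQsymm : ∀ x y, ⟪Qlim x, y⟫_ℝ = ⟪x, Qlim y⟫_ℝ := by
    intro x y
    have h1 : Tendsto (fun j => ⟪projC (L (φ j)) x, y⟫_ℝ) atTop (𝓝 ⟪Qlim x, y⟫_ℝ) :=
      (aux_tendsto_apply hQ tendsto_const_nhds).inner tendsto_const_nhds
    have h2 : (fun j => ⟪projC (L (φ j)) x, y⟫_ℝ) = fun j => ⟪x, projC (L (φ j)) y⟫_ℝ :=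
      funext fun j => aux_projC_symm _ x y
    rw [h2] at h1
    exact tendsto_nhds_unique h1
      (Filter.Tendsto.inner tendsto_const_nhds (aux_tendsto_apply hQ tendsto_const_nhds))
  set M : Submodule ℝ (E2 n) := LinearMap.range (Qlim : E2 n →ₗ[ℝ] E2 n) with hM_def
  have hprojM : projC M = Qlim := aux_projC_range Qlim hQidem hQsymm
  -- finrank M = n via traces
  have hfinM : Module.finrank ℝ M = n := by
    have h1 : Tendsto (fun j => trC n (projC (L (φ j)))) atTop (𝓝 (trC n Qlim)) :=
      (aux_trC_cont.tendsto _).comp hQ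
    have h2 : (fun j => trC n (projC (L (φ j)))) = fun _ => (n : ℝ) :=
      funext fun j => by rw [aux_trC_projC, (hLSp (φ j)).1]
    rw [h2] at h1
    have h3 : trC n Qlim = (n : ℝ) := tendsto_nhds_unique h1 tendsto_const_nhds
    have h4 : trC n (projC M) = (Module.finrank ℝ M : ℝ) := aux_trC_projC M
    rw [hprojM, h3] at h4
    exact_mod_cast h4.symm
  -- M ∈ Sp F z
  have hdZM : Tendsto (fun j => dZ (L (φ j)) M) atTop (𝓝 0) := by
    have h1 := tendsto_iff_dist_tendsto_zero.mp hQ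
    have h2 : (fun j => dZ (L (φ j)) M) = fun j => dist (projC (L (φ j))) Qlim := by
      funext j; rw [dZ, hprojM, dist_eq_norm]
    rw [h2]
    exact h1
  have hMSp : M ∈ Sp F z := aux_sp_closed (fun j => hLSp (φ j)) hfinM hdZM
  have hZnreg : adjS M ∈ Znreg n := hreg.2 (adjS M) ⟨M, hMSp, rfl⟩
  -- ulim ∈ adjS M
  have hsz : ∀ k, projC (L k) ((Sneg n).symm (u k)) = 0 := by
    intro k
    obtain ⟨v, hv, hveq⟩ := huadj k
    have hv' : (Sneg n).symm (u k) = v := by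
      rw [← hveq]; exact (Sneg n).symm_apply_apply v
    rw [hv']
    exact (aux_projC_eq_zero_iff _ _).mpr hv
  have hlim0 : Qlim ((Sneg n).symm ulim) = 0 := by
    have h1 : Tendsto (fun j => projC (L (φ j)) ((Sneg n).symm (u (φ j)))) atTop
        (𝓝 (Qlim ((Sneg n).symm ulim))) :=
      aux_tendsto_apply hQ ((aux_continuous_snegsymm.tendsto _).comp hu)
    have h2 : (fun j => projC (L (φ j)) ((Sneg n).symm (u (φ j)))) = fun _ => (0 : E2 n) :=
      funext fun j => hsz (φ j)
    rw [h2] at h1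
    exact tendsto_nhds_unique h1 tendsto_const_nhds
  have hmemorth : (Sneg n).symm ulim ∈ Mᗮ := by
    apply (aux_projC_eq_zero_iff M _).mp
    rw [hprojM]; exact hlim0
  have huM : ulim ∈ adjS M :=
    ⟨(Sneg n).symm ulim, hmemorth, (Sneg n).apply_symm_apply ulim⟩
  -- snd2 ulim = 0
  have hsnd0 : snd2 ulim = 0 := by
    have h1 : Tendsto (fun j => ‖snd2 (u (φ j))‖) atTop (𝓝 ‖snd2 ulim‖) :=
      ((aux_continuous_snd2.tendsto _).comp hu).norm
    have h0 : Tendsto (fun j => ‖snd2 (u (φ j))‖) atTop (𝓝 0) := by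
      apply squeeze_zero (fun j => norm_nonneg _) ?_ aux_inv_tendsto
      intro j
      refine le_trans (husnd (φ j)) ?_
      apply inv_anti₀ (by positivity)
      have : (j : ℝ) ≤ (φ j : ℝ) := by exact_mod_cast hφ.le_apply
      linarith
    have := tendsto_nhds_unique h1 h0
    exact norm_eq_zero.mp this
  have hnorm1 : ‖ulim‖ = 1 := by
    have h1 : Tendsto (fun j => ‖u (φ j)‖) atTop (𝓝 ‖ulim‖) := hu.norm
    have h2 : (fun j => ‖u (φ j)‖) = fun _ => (1 : ℝ) := funext fun j => hu1 (φ j)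
    rw [h2] at h1
    exact tendsto_nhds_unique h1 tendsto_const_nhds
  -- contradiction via Znreg
  have hfst0 : fst2 ulim = 0 := by
    apply hZnreg.2 (fst2 ulim)
    have hmk0 : mk2 (fst2 ulim) (snd2 ulim) = ulim := rfl
    have hmk : mk2 (fst2 ulim) 0 = ulim := by rw [← hsnd0]; exact hmk0
    rw [hmk]; exact huM
  have hulim0 : ulim = 0 := by
    have h : ulim = mk2 (fst2 ulim) (snd2 ulim) := rfl
    rw [h, hfst0, hsnd0]
    simp [mk2]
  rw [hulim0, norm_zero] at hnorm1
  exact one_ne_zero hnorm1.symm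


end SCD
end
end
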